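/- arXiv:1401.3585 — 3 statements merged into one kernel-verified Lean document; each statement's English description precedes it below -/
import Mathlib

section
/- Let I be a countable set, M a smooth manifold, and for each i ∈ I let M_i be a smooth manifold with dim(M_i) < dim(M) and f_i : M_i → M a smooth map. Then the union of the images f_i(M_i) over all i ∈ I is not equal to M. -/
open Set Manifold Topology Filter MeasureTheory
open scoped ENNReal NNReal

/-- Key local lemma: the image of a compact set under a smooth map from a manifold of
dimension `m < n` into an `n`-manifold has empty interior. -/
theorem aux_interior_image_compact_empty
    {n : ℕ} {M : Type*} [TopologicalSpace M]
    [ChartedSpace (EuclideanSpace ℝ (Fin n)) M]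
    [IsManifold (𝓡 n) (⊤ : ℕ∞) M]
    {mi : ℕ} {Ni : Type*} [TopologicalSpace Ni]
    [ChartedSpace (EuclideanSpace ℝ (Fin mi)) Ni]
    [IsManifold (𝓡 mi) (⊤ : ℕ∞) Ni]
    (hdim : mi < n) (g : Ni → M) (hg : ContMDiff (𝓡 mi) (𝓡 n) (⊤ : ℕ∞) g)
    {K : Set Ni} (hK : IsCompact K) : interior (g '' K) = ∅ := by
  by_contra h
  obtain ⟨x, hx⟩ := nonempty_iff_ne_empty.2 h
  -- chart on M at x
  set ψ := extChartAt (𝓡 n) x with hψ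
  have hxs : x ∈ ψ.source := mem_extChartAt_source x
  -- the image of the interior is a neighborhood of ψ x, so has dimH = n
  have hmem : ψ '' (interior (g '' K) ∩ ψ.source) ∈ 𝓝 (ψ x) := by
    have h1 : interior (g '' K) ∩ ψ.source ∈ 𝓝 x :=
      Filter.inter_mem (isOpen_interior.mem_nhds hx) ((isOpen_extChartAt_source x).mem_nhds hxs)
    have h2 := map_extChartAt_nhds (I := 𝓡 n) x
    rw [ModelWithCorners.range_eq_univ, nhdsWithin_univ] at h2
    rw [← h2]
    exact Filter.image_mem_map h1
  have hdim1 : dimH (ψ '' (interior (g '' K) ∩ ψ.source)) = (n : ℝ≥0∞) := by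
    rw [Real.dimH_of_mem_nhds hmem, finrank_euclideanSpace_fin]
  -- cover K by finitely many charts of Ni
  obtain ⟨t, hts, htfin, htK⟩ := hK.elim_finite_subcover_image
    (c := fun y => (extChartAt (𝓡 mi) y).source)
    (fun (y : Ni) (_ : y ∈ K) => isOpen_extChartAt_source y)
    (fun z hz => mem_biUnion hz (mem_extChartAt_source z))
  -- bound the dimension of each piece
  have key : ∀ y, dimH (ψ '' (g '' (K ∩ (extChartAt (𝓡 mi) y).source) ∩ ψ.source))
      ≤ (mi : ℝ≥0∞) := by
    intro y
    set e := extChartAt (𝓡 mi) y with he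
    set S : Set Ni := K ∩ e.source ∩ g ⁻¹' ψ.source with hS
    have himg : g '' (K ∩ e.source) ∩ ψ.source = g '' S := by
      rw [hS, image_inter_preimage]
    set O : Set (EuclideanSpace ℝ (Fin mi)) := e.target ∩ e.symm ⁻¹' (g ⁻¹' ψ.source) with hO
    have hOopen : IsOpen O := by
      apply (continuousOn_extChartAt_symm y).isOpen_inter_preimage (isOpen_extChartAt_target y)
      exact (isOpen_extChartAt_source x).preimage hg.continuous
    have hgs : ContDiffOn ℝ 1 (ψ ∘ g ∘ e.symm) O := by
      have := (contMDiff_iff.1 hg).2 y x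
      exact this.of_le (by exact_mod_cast le_top)
    have hA : e '' S ⊆ O := by
      rintro _ ⟨w, hw, rfl⟩
      refine ⟨e.map_source hw.1.2, ?_⟩
      simp only [mem_preimage]
      rw [e.left_inv hw.1.2]
      exact hw.2
    have him : ψ '' (g '' S) = (ψ ∘ g ∘ e.symm) '' (e '' S) := by
      rw [image_image, image_image]
      apply image_congr
      intro w hw
      simp only [Function.comp_apply, e.left_inv hw.1.2]
    calc dimH (ψ '' (g '' (K ∩ e.source) ∩ ψ.source))
        = dimH ((ψ ∘ g ∘ e.symm) '' (e '' S)) := by rw [himg, him]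
      _ ≤ dimH (e '' S) := by
          apply dimH_image_le_of_locally_lipschitzOn
          intro z hz
          obtain ⟨C, u, hu, hlip⟩ :=
            ((hgs z (hA hz)).contDiffAt (hOopen.mem_nhds (hA hz))).exists_lipschitzOnWith
          exact ⟨C, u, nhdsWithin_le_nhds hu, hlip⟩
      _ ≤ dimH (univ : Set (EuclideanSpace ℝ (Fin mi))) := dimH_mono (subset_univ _)
      _ = (mi : ℝ≥0∞) := by
          rw [Real.dimH_univ_eq_finrank, finrank_euclideanSpace_fin]
  -- combine
  have hsub : ψ '' (interior (g '' K) ∩ ψ.source)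
      ⊆ ⋃ y ∈ t, ψ '' (g '' (K ∩ (extChartAt (𝓡 mi) y).source) ∩ ψ.source) := by
    intro z hz
    obtain ⟨w, ⟨hw1, hw2⟩, rfl⟩ := hz
    obtain ⟨p, hpK, rfl⟩ := interior_subset hw1
    obtain ⟨y, hyt, hpy⟩ := by
      have := htK hpK
      simpa using this
    refine mem_biUnion hyt ⟨g p, ⟨⟨p, ⟨hpK, ?_⟩, rfl⟩, hw2⟩, rfl⟩
    rwa [extChartAt_source]
  have : (n : ℝ≥0∞) ≤ (mi : ℝ≥0∞) := by
    calc (n : ℝ≥0∞) = dimH (ψ '' (interior (g '' K) ∩ ψ.source)) := hdim1.symm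
      _ ≤ dimH (⋃ y ∈ t, ψ '' (g '' (K ∩ (extChartAt (𝓡 mi) y).source) ∩ ψ.source)) :=
          dimH_mono hsub
      _ = ⨆ y ∈ t, dimH (ψ '' (g '' (K ∩ (extChartAt (𝓡 mi) y).source) ∩ ψ.source)) :=
          dimH_bUnion htfin.countable _
      _ ≤ (mi : ℝ≥0∞) := by
          apply iSup₂_le
          intro y _
          exact key y
  exact absurd (Nat.cast_le.1 this) (Nat.not_le.2 hdim)

/-- A countable union of images of smooth maps from manifolds of
strictly smaller dimension cannot cover a (nonempty) smooth manifold. -/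
theorem countable_union_of_smooth_images_ne_univ
    {I : Type*} [Countable I]
    {n : ℕ} {M : Type*} [TopologicalSpace M]
    [ChartedSpace (EuclideanSpace ℝ (Fin n)) M]
    [IsManifold (𝓡 n) (⊤ : ℕ∞) M]
    [T2Space M] [SecondCountableTopology M] [Nonempty M]
    {m : I → ℕ} {N : I → Type*}
    [∀ i, TopologicalSpace (N i)]
    [∀ i, ChartedSpace (EuclideanSpace ℝ (Fin (m i))) (N i)]
    [∀ i, IsManifold (𝓡 (m i)) (⊤ : ℕ∞) (N i)]
    [∀ i, T2Space (N i)] [∀ i, SecondCountableTopology (N i)]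
    (hdim : ∀ i, m i < n)
    (f : ∀ i, N i → M)
    (hf : ∀ i, ContMDiff (𝓡 (m i)) (𝓡 n) (⊤ : ℕ∞) (f i)) :
    (⋃ i, Set.range (f i)) ≠ Set.univ := by
  have hMlc : LocallyCompactSpace M :=
    Manifold.locallyCompact_of_finiteDimensional (𝓡 n)
  have hMbaire : BaireSpace M := BaireSpace.of_t2Space_locallyCompactSpace
  have hNlc : ∀ i, LocallyCompactSpace (N i) := fun i =>
    Manifold.locallyCompact_of_finiteDimensional (𝓡 (m i))
  have hNsc : ∀ i, SigmaCompactSpace (N i) := fun i => by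
    haveI := hNlc i
    infer_instance
  intro hcover
  -- a countable covering family of closed sets
  set F : I × ℕ → Set M := fun p =>
    f p.1 '' (haveI := hNsc p.1; compactCovering (N p.1) p.2) with hF
  have hcomp : ∀ p : I × ℕ, IsCompact (F p) := fun p => by
    haveI := hNsc p.1
    exact ((isCompact_compactCovering (N p.1) p.2)).image (hf p.1).continuous
  have hclosed : ∀ p, IsClosed (F p) := fun p => (hcomp p).isClosed
  have hUniv : ⋃ p, F p = univ := by
    apply eq_univ_of_univ_subset
    rw [← hcover]
    rintro z hz
    obtain ⟨i, w, rfl⟩ := by simpa using hz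
    haveI := hNsc i
    obtain ⟨k, hk⟩ := iUnion_eq_univ_iff.1 (iUnion_compactCovering (N i)) w
    exact mem_iUnion.2 ⟨⟨i, k⟩, ⟨w, hk, rfl⟩⟩
  obtain ⟨p, hp⟩ := nonempty_interior_of_iUnion_of_closed hclosed hUniv
  haveI := hNsc p.1
  rw [aux_interior_image_compact_empty (hdim p.1) (f p.1) (hf p.1)
    (isCompact_compactCovering (N p.1) p.2)] at hp
  exact hp.ne_empty rfl
end

section
/- Let M be a smooth manifold and f : N → M a smooth map from a smooth manifold N with dim(N) < dim(M). Then the image f(N) has measure zero in M (with respect to any smooth measure / in every chart). -/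
open Set Manifold MeasureTheory

/-- Auxiliary: a differentiable image of a set of a strictly lower-dimensional
Euclidean space has measure zero. -/
theorem aux_image_contDiffOn_null {k n : ℕ} (hdim : k < n)
    (h : EuclideanSpace ℝ (Fin k) → EuclideanSpace ℝ (Fin n))
    (u t : Set (EuclideanSpace ℝ (Fin k)))
    (hu : u ⊆ t) (hh : ContDiffOn ℝ 1 h t) :
    volume (h '' u) = 0 := by
  classical
  set P : EuclideanSpace ℝ (Fin n) → EuclideanSpace ℝ (Fin k) :=
    fun v => WithLp.toLp 2 (fun i => v (Fin.castLE hdim.le i)) with hP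
  set ι : EuclideanSpace ℝ (Fin k) → EuclideanSpace ℝ (Fin n) :=
    fun v => WithLp.toLp 2 (fun j => if hj : (j : ℕ) < k then v ⟨j, hj⟩ else 0) with hι
  have hPι : ∀ w, P (ι w) = w := by
    intro w; ext i
    simp [hP, hι, i.isLt]
  let lP : EuclideanSpace ℝ (Fin n) →ₗ[ℝ] EuclideanSpace ℝ (Fin k) :=
    { toFun := P, map_add' := fun a b => rfl, map_smul' := fun c a => rfl }
  let lι : EuclideanSpace ℝ (Fin k) →ₗ[ℝ] EuclideanSpace ℝ (Fin n) :=
    { toFun := ι,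
      map_add' := fun a b => by ext j; by_cases hj : (j : ℕ) < k <;> simp [ι, hj]
      map_smul' := fun c a => by ext j; by_cases hj : (j : ℕ) < k <;> simp [ι, hj] }
  have hPd : Differentiable ℝ P := (lP.toContinuousLinearMap).differentiable
  have hrange : LinearMap.range lι ≠ ⊤ := by
    intro htop
    have : (EuclideanSpace.single ⟨k, hdim⟩ (1:ℝ) : EuclideanSpace ℝ (Fin n)) ∈
        LinearMap.range lι := htop ▸ Submodule.mem_top
    obtain ⟨w, hw⟩ := this
    have := congrArg (fun v => v ⟨k, hdim⟩) hw
    simp [lι, ι, EuclideanSpace.single] at this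
  have hnull : volume (ι '' u) = 0 := by
    refine measure_mono_null (image_subset_iff.mpr ?_)
      (Measure.addHaar_submodule volume _ hrange)
    intro w _
    exact ⟨w, rfl⟩
  have hdiff : DifferentiableOn ℝ (h ∘ P) (ι '' u) := by
    refine DifferentiableOn.comp (hh.differentiableOn one_ne_zero) (hPd.differentiableOn) ?_
    rintro z ⟨w, hw, rfl⟩
    exact hu (by rwa [hPι])
  have him : h '' u = (h ∘ P) '' (ι '' u) := by
    rw [image_image]
    refine le_antisymm ?_ ?_
    · rintro z ⟨w, hw, rfl⟩; exact ⟨w, hw, by simp [Function.comp, hPι]⟩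
    · rintro z ⟨w, hw, rfl⟩; exact ⟨w, hw, by simp [Function.comp, hPι]⟩
  rw [him]
  exact addHaar_image_eq_zero_of_differentiableOn_of_addHaar_eq_zero volume hdiff hnull

/-- The image of a smooth map from a manifold of strictly smaller
dimension has measure zero in every chart of the target manifold. -/
theorem image_of_smooth_map_from_lower_dim_measure_zero
    {n : ℕ} {M : Type*} [TopologicalSpace M]
    [ChartedSpace (EuclideanSpace ℝ (Fin n)) M]
    [IsManifold (𝓡 n) (⊤ : ℕ∞) M]
    [T2Space M] [SecondCountableTopology M]
    {k : ℕ} {N : Type*} [TopologicalSpace N]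
    [ChartedSpace (EuclideanSpace ℝ (Fin k)) N]
    [IsManifold (𝓡 k) (⊤ : ℕ∞) N]
    [T2Space N] [SecondCountableTopology N]
    (hdim : k < n)
    (f : N → M) (hf : ContMDiff (𝓡 k) (𝓡 n) (⊤ : ℕ∞) f) :
    ∀ e ∈ atlas (EuclideanSpace ℝ (Fin n)) M,
      MeasureTheory.volume (e '' (Set.range f ∩ e.source)) = 0 := by
  intro e he
  -- the map `e ∘ f` is smooth on `S := f ⁻¹' e.source`
  set S : Set N := f ⁻¹' e.source with hS
  have hg : ContMDiffOn (𝓡 k) (𝓡 n) (⊤ : ℕ∞) (e ∘ f) S := by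
    refine ContMDiffOn.comp (contMDiffOn_of_mem_maximalAtlas (StructureGroupoid.subset_maximalAtlas _ he))
      (hf.contMDiffOn) ?_
    exact fun x hx => hx
  -- rewrite the target set
  have heq : e '' (Set.range f ∩ e.source) = (e ∘ f) '' S := by
    rw [Set.inter_comm, ← Set.image_preimage_eq_inter_range, ← Set.image_comp]
  rw [heq]
  -- countable cover of N by chart sources
  obtain ⟨T, hTc, hTcov⟩ := TopologicalSpace.countable_cover_nhds
    (fun x : N => (chartAt (EuclideanSpace ℝ (Fin k)) x).open_source.mem_nhds
      (mem_chart_source _ x))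
  have hcover : (e ∘ f) '' S ⊆
      ⋃ x ∈ T, (e ∘ f) '' (S ∩ (chartAt (EuclideanSpace ℝ (Fin k)) x).source) := by
    rintro z ⟨w, hw, rfl⟩
    have : w ∈ ⋃ x ∈ T, (chartAt (EuclideanSpace ℝ (Fin k)) x).source := by
      rw [hTcov]; trivial
    obtain ⟨x, hx, hwx⟩ := Set.mem_iUnion₂.mp this
    exact Set.mem_iUnion₂.mpr ⟨x, hx, Set.mem_image_of_mem _ ⟨hw, hwx⟩⟩
  refine measure_mono_null hcover ((measure_biUnion_null_iff hTc).mpr ?_)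
  intro x _
  set c := chartAt (EuclideanSpace ℝ (Fin k)) x with hc
  -- transfer through the chart c
  have himg : (e ∘ f) '' (S ∩ c.source) =
      ((e ∘ f) ∘ c.symm) '' (c '' (S ∩ c.source)) := by
    rw [Set.image_image]
    apply Set.image_congr
    intro a ha
    simp [c.left_inv ha.2]
  rw [himg]
  -- the transferred map is C^∞ on the transferred set
  have hsub : c '' (S ∩ c.source) ⊆ c.target ∩ c.symm ⁻¹' S := by
    rintro z ⟨w, hw, rfl⟩
    refine ⟨c.map_source hw.2, ?_⟩
    simp only [Set.mem_preimage, c.left_inv hw.2]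
    exact hw.1
  have hcd : ContDiffOn ℝ 1 ((e ∘ f) ∘ c.symm)
      (c.target ∩ c.symm ⁻¹' S) := by
    have H := (contMDiffOn_iff.mp hg).2 x 0
    simp only [mfld_simps, chartAt_self_eq] at H
    rw [hc]
    exact H.of_le (show (1 : WithTop ℕ∞) ≤ ((⊤ : ℕ∞) : WithTop ℕ∞) by exact_mod_cast (le_top : (1 : ℕ∞) ≤ ⊤))
  exact aux_image_contDiffOn_null hdim _ _ _ hsub hcd
end

section
/- Let V be a finite-dimensional real inner product space and let S ⊂ V be a full compact submanifold (not contained in any proper affine subspace) such that S is contained in a sphere centered at the origin of radius r > 0. If ξ is a normal vector field on S that is constant as a V-valued map, then ξ = 0. -/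
open scoped RealInnerProductSpace

/-- A constant normal vector field on a full compact (connected,
smoothly path-connected) submanifold `S` of a Euclidean space `V` contained in a
sphere around the origin must vanish. Normality of the constant vector `c` is
expressed by orthogonality to the velocity of every differentiable curve in `S`. -/
theorem constant_normal_field_on_full_submanifold_vanishes
    {V : Type*} [NormedAddCommGroup V] [InnerProductSpace ℝ V]
    [FiniteDimensional ℝ V]
    (S : Set V) (hScompact : IsCompact S) (hSconn : IsConnected S)
    (r : ℝ) (hr : 0 < r) (hsphere : S ⊆ Metric.sphere (0 : V) r)
    (hfull : affineSpan ℝ S = ⊤)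
    (hpathconn : ∀ q ∈ S, ∀ q' ∈ S, ∃ γ : ℝ → V,
      Differentiable ℝ γ ∧ (∀ t, γ t ∈ S) ∧ γ 0 = q ∧ γ 1 = q')
    (c : V)
    (hnormal : ∀ γ : ℝ → V, Differentiable ℝ γ → (∀ t, γ t ∈ S) →
      ∀ t, ⟪c, deriv γ t⟫ = 0) :
    c = 0 := by
  -- The map x ↦ ⟪c, x⟫ is constant on S
  have key : ∀ q ∈ S, ∀ q' ∈ S, ⟪c, q⟫ = ⟪c, q'⟫ := by
    intro q hq q' hq'
    obtain ⟨γ, hγd, hγS, hγ0, hγ1⟩ := hpathconn q hq q' hq'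
    have hf : Differentiable ℝ (fun t => ⟪c, γ t⟫) := by
      exact (innerSL ℝ c).differentiable.comp hγd
    have hderiv : ∀ t, deriv (fun t => ⟪c, γ t⟫) t = 0 := by
      intro t
      have h1 : HasDerivAt (fun t => ⟪c, γ t⟫) (⟪c, deriv γ t⟫ + ⟪0, γ t⟫) t :=
        (hasDerivAt_const t c).inner ℝ (hγd t).hasDerivAt
      rw [h1.deriv, inner_zero_left, add_zero]
      exact hnormal γ hγd hγS t
    have := is_const_of_deriv_eq_zero hf hderiv 0 1
    rw [hγ0, hγ1] at this
    exact this
  -- Hence c ⊥ vectorSpan ℝ S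
  have hv : vectorSpan ℝ S = ⊤ := AffineSubspace.vectorSpan_eq_top_of_affineSpan_eq_top ℝ V V hfull
  have hle : vectorSpan ℝ S ≤ (ℝ ∙ c)ᗮ := by
    rw [vectorSpan_def]
    refine Submodule.span_le.2 ?_
    rintro v ⟨q, hq, q', hq', rfl⟩
    rw [SetLike.mem_coe, Submodule.mem_orthogonal_singleton_iff_inner_right]
    simp only [vsub_eq_sub, inner_sub_right]
    rw [key q hq q' hq']
    ring
  have hc : c ∈ (ℝ ∙ c)ᗮ := by
    apply hle
    rw [hv]; trivial
  have : ⟪c, c⟫ = 0 :=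
    hc c (Submodule.mem_span_singleton_self c)
  exact inner_self_eq_zero.mp this
end
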